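/- arXiv:2001.08149 — 8 statements merged into one kernel-verified Lean document; each statement's English description precedes it below -/
import Mathlib

section
/- Let E be a reflexive, strictly convex Banach space and let C be a nonempty closed convex subset of E. Then for every x ∈ E there exists a unique u ∈ C such that ‖u - x‖ ≤ ‖c - x‖ for all c ∈ C. -/
open Metric NormedSpace

/-- A closed convex set is closed in the weak topology. -/
theorem aux_isClosed_image_toWeakSpace {E : Type*} [NormedAddCommGroup E] [NormedSpace ℝ E]
    {s : Set E} (hs : IsClosed s) (hconv : Convex ℝ s) :
    IsClosed (toWeakSpace ℝ E '' s) := by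
  have h := hconv.toWeakSpace_closure (𝕜 := ℝ)
  rw [hs.closure_eq] at h
  rw [h]
  exact isClosed_closure

/-- In a reflexive space, closed balls are weakly compact. -/
theorem aux_isCompact_image_closedBall {E : Type*} [NormedAddCommGroup E] [NormedSpace ℝ E]
    (hrefl : Function.Surjective (NormedSpace.inclusionInDoubleDual ℝ E)) (x : E) (r : ℝ) :
    IsCompact (toWeakSpace ℝ E '' Metric.closedBall x r) := by
  set J := NormedSpace.inclusionInDoubleDualLi ℝ (E := E) with hJ
  have hJfun : ∀ z : E, (J z : StrongDual ℝ (StrongDual ℝ E)) = NormedSpace.inclusionInDoubleDual ℝ E z :=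
    fun z => rfl
  have hinj : Function.Injective J := J.injective
  have hsurj : Function.Surjective J := by
    intro y
    obtain ⟨z, hz⟩ := hrefl y
    exact ⟨z, by rw [hJfun, hz]⟩
  let e : E ≃ₗ[ℝ] StrongDual ℝ (StrongDual ℝ E) :=
    LinearEquiv.ofBijective J.toLinearMap ⟨hinj, hsurj⟩
  have he : ∀ z : E, e z = J z := fun z => rfl
  let g : WeakDual ℝ (StrongDual ℝ E) → WeakSpace ℝ E :=
    fun ψ => toWeakSpace ℝ E (e.symm (WeakDual.toStrongDual ψ))
  have hg : Continuous g := by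
    apply WeakBilin.continuous_of_continuous_eval
    intro f
    have key : ∀ ψ : WeakDual ℝ (StrongDual ℝ E),
        (topDualPairing ℝ E).flip (toWeakSpace ℝ E (e.symm (WeakDual.toStrongDual ψ))) f
          = ψ f := by
      intro ψ
      conv_rhs => rw [show (ψ : StrongDual ℝ E → ℝ) = (WeakDual.toStrongDual ψ : StrongDual ℝ E → ℝ) from rfl,
        ← e.apply_symm_apply (WeakDual.toStrongDual ψ)]
      rfl
    simpa only [g, key] using WeakDual.eval_continuous (𝕜 := ℝ) (E := StrongDual ℝ E) f
  have himg : toWeakSpace ℝ E '' Metric.closedBall x r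
      = g '' (WeakDual.toStrongDual ⁻¹' Metric.closedBall (J x) r) := by
    ext y
    constructor
    · rintro ⟨u, hu, rfl⟩
      refine ⟨WeakDual.toStrongDual.symm (e u), ?_, ?_⟩
      · simp only [Set.mem_preimage, LinearEquiv.apply_symm_apply, Metric.mem_closedBall]
        rw [dist_eq_norm (E := StrongDual ℝ (StrongDual ℝ E)), he, ← J.map_sub, J.norm_map, ← dist_eq_norm]
        exact hu
      · simp only [g, LinearEquiv.apply_symm_apply, LinearEquiv.symm_apply_apply]
    · rintro ⟨ψ, hψ, rfl⟩
      refine ⟨e.symm (WeakDual.toStrongDual ψ), ?_, rfl⟩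
      simp only [Set.mem_preimage, Metric.mem_closedBall] at hψ ⊢
      rw [dist_eq_norm]
      have : WeakDual.toStrongDual ψ = J (e.symm (WeakDual.toStrongDual ψ)) :=
        (e.apply_symm_apply (WeakDual.toStrongDual ψ)).symm
      rw [dist_eq_norm (E := StrongDual ℝ (StrongDual ℝ E)), this, ← J.map_sub, J.norm_map] at hψ
      exact hψ
  rw [himg]
  exact (WeakDual.isCompact_closedBall (𝕜 := ℝ) (J x) r).image hg

/-- In a reflexive strictly convex Banach space, every point admits a
unique nearest point in a nonempty closed convex set. -/
theorem stmt_1 {E : Type*} [NormedAddCommGroup E] [NormedSpace ℝ E] [CompleteSpace E]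
    (hrefl : Function.Surjective (NormedSpace.inclusionInDoubleDual ℝ E))
    (hsc : ∀ x y : E, ‖x‖ = 1 → ‖y‖ = 1 → x ≠ y → ‖(1 / 2 : ℝ) • (x + y)‖ < 1)
    (C : Set E) (hCne : C.Nonempty) (hCc : IsClosed C) (hCconv : Convex ℝ C)
    (x : E) :
    ∃! u, u ∈ C ∧ ∀ c ∈ C, ‖u - x‖ ≤ ‖c - x‖ := by
  classical
  set d := Metric.infDist x C with hd
  have hex : ∃ u, u ∈ C ∧ ∀ c ∈ C, ‖u - x‖ ≤ ‖c - x‖ := by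
    set K : ℕ → Set (WeakSpace ℝ E) := fun n =>
      toWeakSpace ℝ E '' (C ∩ Metric.closedBall x (d + 1 / (n + 1))) with hK
    have hKcl : ∀ n, IsClosed (K n) := fun n =>
      aux_isClosed_image_toWeakSpace (hCc.inter Metric.isClosed_closedBall)
        (hCconv.inter (convex_closedBall x _))
    have hKne : ∀ n, (K n).Nonempty := by
      intro n
      have hpos : (0 : ℝ) < 1 / (n + 1) := by positivity
      have hlt : d < d + 1 / (n + 1) := by linarith
      obtain ⟨c, hcC, hc⟩ := (Metric.infDist_lt_iff hCne).mp hlt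
      exact ⟨toWeakSpace ℝ E c, Set.mem_image_of_mem _
        ⟨hcC, by rw [Metric.mem_closedBall, dist_comm]; exact hc.le⟩⟩
    have hK0 : IsCompact (K 0) := by
      have hc := aux_isCompact_image_closedBall hrefl x (d + 1 / (((0:ℕ):ℝ) + 1))
      exact hc.of_isClosed_subset (hKcl 0) (Set.image_mono Set.inter_subset_right)
    have hKmono : ∀ n, K (n + 1) ⊆ K n := by
      intro n
      apply Set.image_mono
      apply Set.inter_subset_inter_right
      apply Metric.closedBall_subset_closedBall
      have h1 : (1 : ℝ) / (n + 1 + 1) ≤ 1 / (n + 1) := by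
        apply one_div_le_one_div_of_le
        · positivity
        · linarith
      push_cast
      linarith
    obtain ⟨w, hw⟩ :=
      IsCompact.nonempty_iInter_of_sequence_nonempty_isCompact_isClosed K hKmono hKne hK0 hKcl
    rw [Set.mem_iInter] at hw
    obtain ⟨u, hu0, huw⟩ := hw 0
    have huC : u ∈ C := hu0.1
    have hub : ∀ n : ℕ, dist u x ≤ d + 1 / (n + 1) := by
      intro n
      obtain ⟨u', hu', huw'⟩ := hw n
      have heq : u' = u := (toWeakSpace ℝ E).injective (huw'.trans huw.symm)
      rw [← heq]
      exact Metric.mem_closedBall.mp hu'.2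
    have hud : dist u x ≤ d := by
      by_contra h
      push_neg at h
      obtain ⟨n, hn⟩ := exists_nat_one_div_lt (sub_pos.mpr h)
      have := hub n
      have : (1 : ℝ) / (n + 1) < 1 / (n + 1) := by
        calc (1 : ℝ) / (n + 1) < dist u x - d := by exact_mod_cast hn
          _ ≤ 1 / (n + 1) := by linarith [hub n]
      exact lt_irrefl _ this
    refine ⟨u, huC, fun c hc => ?_⟩
    rw [← dist_eq_norm, ← dist_eq_norm]
    calc dist u x ≤ d := hud
      _ ≤ dist c x := by rw [dist_comm]; exact Metric.infDist_le_dist_of_mem hc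
  obtain ⟨u, huC, humin⟩ := hex
  refine ⟨u, ⟨huC, humin⟩, ?_⟩
  rintro v ⟨hvC, hvmin⟩
  by_contra hne
  set m := ‖u - x‖ with hm_def
  have hm : ‖v - x‖ = m := le_antisymm (hvmin u huC) (humin v hvC)
  have hmid : (1 / 2 : ℝ) • (u + v) ∈ C := by
    have := hCconv huC hvC (by norm_num : (0:ℝ) ≤ 1/2) (by norm_num : (0:ℝ) ≤ 1/2)
      (by norm_num : (1/2 : ℝ) + 1/2 = 1)
    rwa [smul_add]
  have hm0 : m ≠ 0 := by
    intro h0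
    have hu : u = x := by rwa [hm_def, norm_eq_zero, sub_eq_zero] at h0
    have hv : v = x := by
      have := hm.trans h0
      rwa [norm_eq_zero, sub_eq_zero] at this
    exact hne (hv.trans hu.symm)
  have hmpos : 0 < m := lt_of_le_of_ne (norm_nonneg _) (Ne.symm hm0)
  set a := m⁻¹ • (u - x) with ha_def
  set b := m⁻¹ • (v - x) with hb_def
  have ha : ‖a‖ = 1 := by
    rw [ha_def, norm_smul, norm_inv, Real.norm_eq_abs, abs_of_pos hmpos, ← hm_def,
      inv_mul_cancel₀ hm0]
  have hb : ‖b‖ = 1 := by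
    rw [hb_def, norm_smul, norm_inv, Real.norm_eq_abs, abs_of_pos hmpos, hm,
      inv_mul_cancel₀ hm0]
  have hab : a ≠ b := by
    intro h
    apply hne
    have := smul_right_injective E (inv_ne_zero hm0) h
    have h2 : v - x = u - x := this.symm
    have := sub_left_injective h2
    exact this.symm ▸ this
  have hlt := hsc a b ha hb hab
  have key : (1 / 2 : ℝ) • (a + b) = m⁻¹ • ((1 / 2 : ℝ) • (u + v) - x) := by
    rw [ha_def, hb_def]
    module
  rw [key, norm_smul, norm_inv, Real.norm_eq_abs, abs_of_pos hmpos] at hlt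
  have hge : m ≤ ‖(1 / 2 : ℝ) • (u + v) - x‖ := humin _ hmid
  have : m⁻¹ * m ≤ m⁻¹ * ‖(1 / 2 : ℝ) • (u + v) - x‖ :=
    mul_le_mul_of_nonneg_left hge (inv_nonneg.mpr hmpos.le)
  rw [inv_mul_cancel₀ hm0] at this
  linarith
end

section
/- Let E be a strictly convex and reflexive Banach space, C a nonempty closed convex subset of E, and S a semigroup acting on C by self-maps T_s. If a ∈ E is an attractive point of the action (that is, ‖a - T_s x‖ ≤ ‖a - x‖ for all s ∈ S and x ∈ C), then the metric projection P_C(a) is a common fixed point: T_s(P_C(a)) = P_C(a) for all s ∈ S. -/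
/-- If `a` is an attractive point of a semigroup representation on a
nonempty closed convex subset `C` of a strictly convex reflexive Banach space, then
the metric projection of `a` onto `C` is a common fixed point. -/
theorem stmt_3 {E : Type*} [NormedAddCommGroup E] [NormedSpace ℝ E] [CompleteSpace E]
    (hrefl : Function.Surjective (NormedSpace.inclusionInDoubleDual ℝ E))
    (hsc : ∀ x y : E, ‖x‖ = 1 → ‖y‖ = 1 → x ≠ y → ‖(1 / 2 : ℝ) • (x + y)‖ < 1)
    (C : Set E) (hCne : C.Nonempty) (hCc : IsClosed C) (hCconv : Convex ℝ C)
    {S : Type*} [Semigroup S] (T : S → E → E)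
    (hmaps : ∀ s, Set.MapsTo (T s) C C)
    (hrep : ∀ s t : S, ∀ x ∈ C, T (s * t) x = T s (T t x))
    (a : E) (hatt : ∀ s : S, ∀ x ∈ C, ‖a - T s x‖ ≤ ‖a - x‖)
    (u : E) (hu : u ∈ C) (hproj : ∀ c ∈ C, ‖u - a‖ ≤ ‖c - a‖) :
    ∀ s : S, T s u = u := by
  intro s
  have hTu : T s u ∈ C := hmaps s hu
  have h1 : ‖a - T s u‖ ≤ ‖a - u‖ := hatt s u hu
  have h1' : ‖T s u - a‖ ≤ ‖u - a‖ := by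
    rw [← norm_neg (T s u - a), ← norm_neg (u - a)]; simpa [neg_sub] using h1
  have h2 : ‖u - a‖ ≤ ‖T s u - a‖ := hproj _ hTu
  have heq : ‖T s u - a‖ = ‖u - a‖ := le_antisymm h1' h2
  set d := ‖u - a‖ with hd
  rcases eq_or_ne d 0 with hd0 | hd0
  · have hua : u = a := by
      have h0 : ‖u - a‖ = 0 := by rw [← hd]; exact hd0
      exact sub_eq_zero.mp (norm_eq_zero.mp h0)
    have hta : T s u = a := sub_eq_zero.mp (norm_eq_zero.mp (heq.trans hd0))
    rw [hta, hua]
  · by_contra hne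
    have hdpos : 0 < d := (norm_nonneg _).lt_of_ne (Ne.symm hd0)
    set x := d⁻¹ • (u - a) with hx
    set y := d⁻¹ • (T s u - a) with hy
    have hxn : ‖x‖ = 1 := by
      rw [hx, norm_smul, norm_inv, Real.norm_eq_abs, abs_of_pos hdpos, ← hd,
        inv_mul_cancel₀ hd0]
    have hyn : ‖y‖ = 1 := by
      rw [hy, norm_smul, norm_inv, Real.norm_eq_abs, abs_of_pos hdpos, heq,
        inv_mul_cancel₀ hd0]
    have hxy : x ≠ y := by
      intro h
      apply hne
      have h2' : u - a = T s u - a := smul_right_injective E (inv_ne_zero hd0) h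
      exact (sub_left_inj.mp h2').symm
    have hlt := hsc x y hxn hyn hxy
    have hmid : (1 / 2 : ℝ) • u + (1 / 2 : ℝ) • T s u ∈ C :=
      hCconv hu hTu (by norm_num) (by norm_num) (by norm_num)
    have e1 : (1 / 2 : ℝ) • (x + y) = d⁻¹ • ((1 / 2 : ℝ) • ((u - a) + (T s u - a))) := by
      rw [hx, hy]; module
    have e2 : ((1 / 2 : ℝ) • u + (1 / 2 : ℝ) • T s u) - a
        = (1 / 2 : ℝ) • ((u - a) + (T s u - a)) := by module
    rw [e1, norm_smul, norm_inv, Real.norm_eq_abs, abs_of_pos hdpos] at hlt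
    have hkey : ‖((1 / 2 : ℝ) • u + (1 / 2 : ℝ) • T s u) - a‖ < d := by
      rw [e2]
      have h := mul_lt_mul_of_pos_left hlt hdpos
      rwa [mul_one, ← mul_assoc, mul_inv_cancel₀ hd0, one_mul] at h
    exact absurd (hproj _ hmid) (not_le.mpr hkey)
end

section
/- Let E be a reflexive, strictly convex Banach space, C a nonempty closed convex subset of E, and {T_s : s ∈ S} a representation of a semigroup S on C by nonexpansive self-maps. Then the set of attractive points A_C(S) is nonempty if and only if the set of common fixed points F(S) is nonempty; moreover F(S) ⊆ A_C(S). -/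
open NormedSpace Filter Metric

lemma exists_nearest {E : Type*} [NormedAddCommGroup E] [NormedSpace ℝ E] [CompleteSpace E]
    (hrefl : Function.Surjective (NormedSpace.inclusionInDoubleDual ℝ E))
    (C : Set E) (hCne : C.Nonempty) (hCc : IsClosed C) (hCconv : Convex ℝ C) (a : E) :
    ∃ p ∈ C, ∀ x ∈ C, ‖a - p‖ ≤ ‖a - x‖ := by
  classical
  set D : Set ℝ := (fun x => ‖a - x‖) '' C with hD
  have hDne : D.Nonempty := hCne.image _
  have hDbd : BddBelow D := ⟨0, by rintro _ ⟨x, -, rfl⟩; positivity⟩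
  set d : ℝ := sInf D with hd
  have hd0 : 0 ≤ d := le_csInf hDne (by rintro _ ⟨x, -, rfl⟩; positivity)
  -- minimizing sequence
  have hseq : ∀ n : ℕ, ∃ x ∈ C, ‖a - x‖ < d + 1 / (n + 1) := by
    intro n
    obtain ⟨r, ⟨x, hx, rfl⟩, hr⟩ := Real.lt_sInf_add_pos hDne
      (ε := 1 / (n + 1)) (by positivity)
    exact ⟨x, hx, hr⟩
  choose x hxC hxlt using hseq
  -- embed into the double dual with weak-* topology
  set J : E →L[ℝ] StrongDual ℝ (StrongDual ℝ E) := inclusionInDoubleDual ℝ E with hJ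
  have hJnorm : ∀ z : E, ‖J z‖ = ‖z‖ := fun z =>
    (inclusionInDoubleDualLi ℝ (E := E)).norm_map z
  set y : ℕ → WeakDual ℝ (StrongDual ℝ E) := fun n => StrongDual.toWeakDual (J (x n)) with hy
  set R : ℝ := d + 1 + ‖a‖ with hR
  set K : Set (WeakDual ℝ (StrongDual ℝ E)) := WeakDual.toStrongDual ⁻¹' closedBall 0 R with hK
  have hyK : ∀ n, y n ∈ K := by
    intro n
    simp only [hK, Set.mem_preimage, mem_closedBall, dist_zero_right]
    have : ‖(WeakDual.toStrongDual (y n) : StrongDual ℝ (StrongDual ℝ E))‖ = ‖x n‖ := hJnorm (x n)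
    refine ((dist_zero_right (WeakDual.toStrongDual (y n) : StrongDual ℝ (StrongDual ℝ E))).trans this).trans_le ?_
    have h1 : ‖x n‖ ≤ ‖a - x n‖ + ‖a‖ := by
      have h := norm_sub_le a (a - x n)
      rw [sub_sub_cancel] at h
      linarith [h]
    have h2 : ‖a - x n‖ ≤ d + 1 := by
      refine (hxlt n).le.trans ?_
      have : (1 : ℝ) / (n + 1) ≤ 1 := by
        rw [div_le_one (by positivity)]; linarith [Nat.cast_nonneg (α := ℝ) n]
      linarith
    linarith
  have hKcomp : IsCompact K := WeakDual.isCompact_closedBall (𝕜 := ℝ) 0 R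
  have hle : Filter.map y atTop ≤ Filter.principal K :=
    le_principal_iff.mpr (eventually_map.mpr (Eventually.of_forall hyK))
  obtain ⟨Λ, hΛK, hΛ⟩ := hKcomp.exists_clusterPt hle
  obtain ⟨p, hp⟩ := hrefl (WeakDual.toStrongDual Λ)
  -- key frequently statement
  have hfreq : ∀ (f : StrongDual ℝ E) (ε : ℝ), 0 < ε → ∃ᶠ n in atTop, |f (x n) - f p| < ε := by
    intro f ε hε
    have hcont : Continuous fun Ψ : WeakDual ℝ (StrongDual ℝ E) => Ψ f :=
      WeakDual.eval_continuous f
    have hU : {Ψ : WeakDual ℝ (StrongDual ℝ E) | |Ψ f - Λ f| < ε} ∈ nhds Λ := by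
      have : IsOpen {Ψ : WeakDual ℝ (StrongDual ℝ E) | |Ψ f - Λ f| < ε} := by
        have : Continuous fun Ψ : WeakDual ℝ (StrongDual ℝ E) => |Ψ f - Λ f| :=
          (hcont.sub continuous_const).abs
        exact isOpen_lt this continuous_const
      exact this.mem_nhds (by simp [hε])
    have := ((nhds Λ).basis_sets.clusterPt_iff_frequently.mp hΛ) _ hU
    rw [Filter.frequently_map] at this
    refine this.mono fun n hn => ?_
    simp only [id, Set.mem_setOf_eq] at hn
    have h2 : Λ f = f p := by
      have h3 := DFunLike.congr_fun hp f
      exact h3.symm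
    rw [h2] at hn
    exact hn
  -- p ∈ C
  have hpC : p ∈ C := by
    by_contra hpc
    obtain ⟨f, u, hfb, hfu⟩ := geometric_hahn_banach_closed_point hCconv hCc hpc
    obtain ⟨n, hn⟩ := (hfreq f (f p - u) (by linarith)).exists
    have := hfb (x n) (hxC n)
    have := abs_lt.mp hn
    linarith
  -- ‖a - p‖ ≤ d
  have hle' : ‖a - p‖ ≤ d := by
    by_cases hap : a - p = 0
    · simp [hap, hd0]
    obtain ⟨g, hg1, hg2⟩ := exists_dual_vector ℝ (a - p) (norm_ne_zero_iff.mpr hap)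
    refine le_of_forall_pos_le_add fun ε hε => ?_
    obtain ⟨N, hN⟩ := exists_nat_gt (2 / ε)
    obtain ⟨n, hg, hnN⟩ := ((hfreq g (ε / 2) (by linarith)).and_eventually
      (eventually_ge_atTop N)).exists
    have e1 : g (a - p) = g a - g p := map_sub g a p
    have e2 : g (a - x n) = g a - g (x n) := map_sub g a (x n)
    have e3 : g (a - x n) ≤ ‖a - x n‖ := by
      have h4 := g.le_opNorm (a - x n)
      rw [hg1, one_mul] at h4
      exact (le_abs_self _).trans ((Real.norm_eq_abs _).symm ▸ h4)
    have habs := abs_lt.mp hg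
    have hcast : (2 / ε : ℝ) < (n : ℝ) + 1 := by
      have : (N : ℝ) ≤ n := Nat.cast_le.mpr hnN
      linarith
    have h1n : (1 : ℝ) / ((n : ℝ) + 1) < ε / 2 := by
      rw [div_lt_div_iff₀ (by positivity) (by norm_num)]
      rw [div_lt_iff₀ hε] at hcast
      have := mul_comm ((n : ℝ) + 1) ε
      linarith
    have hx5 := hxlt n
    have hg2' : g (a - p) = ‖a - p‖ := by exact_mod_cast hg2
    rw [← hg2', e1]
    linarith
  refine ⟨p, hpC, fun z hz => hle'.trans (csInf_le hDbd ⟨z, hz, rfl⟩)⟩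


/-- For a nonexpansive representation of a semigroup `S` on a nonempty
closed convex subset `C` of a reflexive strictly convex Banach space, the set of
attractive points is nonempty iff the set of common fixed points is nonempty;
moreover every common fixed point is an attractive point. -/
theorem stmt_4 {E : Type*} [NormedAddCommGroup E] [NormedSpace ℝ E] [CompleteSpace E]
    (hrefl : Function.Surjective (NormedSpace.inclusionInDoubleDual ℝ E))
    (hsc : ∀ x y : E, ‖x‖ = 1 → ‖y‖ = 1 → x ≠ y → ‖(1 / 2 : ℝ) • (x + y)‖ < 1)
    (C : Set E) (hCne : C.Nonempty) (hCc : IsClosed C) (hCconv : Convex ℝ C)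
    {S : Type*} [Semigroup S] (T : S → E → E)
    (hmaps : ∀ s, Set.MapsTo (T s) C C)
    (hrep : ∀ s t : S, ∀ x ∈ C, T (s * t) x = T s (T t x))
    (hne : ∀ s : S, ∀ x ∈ C, ∀ y ∈ C, ‖T s x - T s y‖ ≤ ‖x - y‖) :
    let A : Set E := {a | ∀ s : S, ∀ x ∈ C, ‖a - T s x‖ ≤ ‖a - x‖}
    let F : Set E := {x | x ∈ C ∧ ∀ s : S, T s x = x}
    (A.Nonempty ↔ F.Nonempty) ∧ F ⊆ A := by
  intro A F
  have hFA : F ⊆ A := by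
    rintro p ⟨hpC, hfix⟩ s z hz
    have h := hne s p hpC z hz
    rwa [hfix s] at h
  refine ⟨⟨?_, fun ⟨p, hp⟩ => ⟨p, hFA hp⟩⟩, hFA⟩
  rintro ⟨a, ha⟩
  obtain ⟨p, hpC, hpmin⟩ := exists_nearest hrefl C hCne hCc hCconv a
  have huniq : ∀ q ∈ C, ‖a - q‖ ≤ ‖a - p‖ → q = p := by
    intro q hq hle
    by_contra hqp
    have heq : ‖a - q‖ = ‖a - p‖ := le_antisymm hle (hpmin q hq)
    by_cases hd0 : ‖a - p‖ = 0
    · have h1 : a - p = 0 := norm_eq_zero.mp hd0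
      have h2 : a - q = 0 := norm_eq_zero.mp (heq.trans hd0)
      exact hqp (by rw [sub_eq_zero] at h1 h2; rw [← h1, ← h2])
    set d : ℝ := ‖a - p‖ with hdd
    have hdpos : 0 < d := lt_of_le_of_ne (norm_nonneg _) (Ne.symm hd0)
    set u : E := d⁻¹ • (a - p) with hu'
    set v : E := d⁻¹ • (a - q) with hv'
    have hu : ‖u‖ = 1 := by
      rw [hu', norm_smul, Real.norm_eq_abs, abs_of_pos (inv_pos.mpr hdpos)]
      field_simp
      exact hdd.symm
    have hv : ‖v‖ = 1 := by
      rw [hv', norm_smul, Real.norm_eq_abs, abs_of_pos (inv_pos.mpr hdpos), heq]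
      field_simp
    have huv : u ≠ v := by
      intro h
      apply hqp
      have h2 := smul_right_injective E (inv_ne_zero (ne_of_gt hdpos)) h
      exact (sub_right_injective h2).symm
    have hkey := hsc u v hu hv huv
    set m : E := (1 / 2 : ℝ) • p + (1 / 2 : ℝ) • q with hm'
    have hmC : m ∈ C := hCconv hpC hq (by norm_num) (by norm_num) (by norm_num)
    have hcomb : (1 / 2 : ℝ) • (u + v) = d⁻¹ • (a - m) := by
      rw [hu', hv', hm']
      module
    rw [hcomb, norm_smul, Real.norm_eq_abs, abs_of_pos (inv_pos.mpr hdpos)] at hkey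
    have : ‖a - m‖ < d := by
      rw [inv_mul_lt_iff₀ hdpos, mul_one] at hkey
      exact hkey
    exact absurd (hpmin m hmC) (by rw [← hdd] at *; linarith)
  exact ⟨p, hpC, fun s => huniq (T s p) (hmaps s hpC) (ha s p hpC)⟩
end

section
/- Let C = {x ∈ ℓ^p : x₁ ≥ 0} for p ≥ 1 (a closed convex subset of ℓ^p) and define T : C → C by T(x₁, x₂, x₃, ...) = (x₁, x₁, x₂, x₃, ...). Then T is continuous, T has the fixed point 0 = (0,0,0,...), but T admits no attractive point: there is no a ∈ ℓ^p with ‖a - Tx‖ ≤ ‖a - x‖ for all x ∈ C. -/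
open scoped ENNReal

noncomputable section Stmt5Aux

namespace Stmt5

/-- the right-shift of a sequence -/
def shiftFun (x : ℕ → ℝ) : ℕ → ℝ := fun n => match n with
  | 0 => 0
  | k + 1 => x k

lemma shiftFun_zero (x : ℕ → ℝ) : shiftFun x 0 = 0 := rfl
lemma shiftFun_succ (x : ℕ → ℝ) (k : ℕ) : shiftFun x (k + 1) = x k := rfl

lemma shiftFun_support_cond (g : ℕ → ℝ) (x : ℕ → ℝ)
    (h0 : g 0 = 0) : ∀ n ∉ Set.range Nat.succ, g n = 0 := by
  intro n hn
  cases n with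
  | zero => exact h0
  | succ k => exact absurd ⟨k, rfl⟩ hn

variable {p : ℝ≥0∞}

lemma hasSum_shift {x : ℕ → ℝ} {q : ℝ} {S : ℝ}
    (h : HasSum (fun n => ‖x n‖ ^ q) S) (hq : 0 < q) :
    HasSum (fun n => ‖shiftFun x n‖ ^ q) S := by
  have hinj : Function.Injective Nat.succ := Nat.succ_injective
  have hsupp : ∀ n ∉ Set.range Nat.succ, ‖shiftFun x n‖ ^ q = 0 := by
    intro n hn
    cases n with
    | zero => simp [shiftFun_zero, Real.zero_rpow hq.ne']
    | succ k => exact absurd ⟨k, rfl⟩ hn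
  refine (hinj.hasSum_iff hsupp).mp ?_
  exact h

lemma memℓp_shift [Fact (1 ≤ p)] (hp' : p ≠ ⊤) {x : ℕ → ℝ} (hx : Memℓp x p) :
    Memℓp (shiftFun x) p := by
  have hq : 0 < p.toReal :=
    ENNReal.toReal_pos (lt_of_lt_of_le zero_lt_one Fact.out).ne' hp'
  apply memℓp_gen
  have hs : Summable fun n => ‖x n‖ ^ p.toReal := hx.summable hq
  exact (hasSum_shift hs.hasSum hq).summable

variable (p) in
/-- the shift as an element of lp -/
def shiftLp [Fact (1 ≤ p)] (hp' : p ≠ ⊤) (x : lp (fun _ : ℕ => ℝ) p) :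
    lp (fun _ : ℕ => ℝ) p :=
  ⟨shiftFun x, memℓp_shift hp' (lp.memℓp x)⟩

lemma shiftLp_apply [Fact (1 ≤ p)] (hp' : p ≠ ⊤) (x : lp (fun _ : ℕ => ℝ) p) (n : ℕ) :
    shiftLp p hp' x n = shiftFun x n := rfl

lemma norm_shiftLp [Fact (1 ≤ p)] (hp' : p ≠ ⊤) (x : lp (fun _ : ℕ => ℝ) p) :
    ‖shiftLp p hp' x‖ = ‖x‖ := by
  have hq : 0 < p.toReal :=
    ENNReal.toReal_pos (lt_of_lt_of_le zero_lt_one Fact.out).ne' hp'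
  have h1 : HasSum (fun n => ‖shiftFun x n‖ ^ p.toReal) (‖x‖ ^ p.toReal) :=
    hasSum_shift (lp.hasSum_norm hq x) hq
  have h2 : HasSum (fun n => ‖(shiftLp p hp' x) n‖ ^ p.toReal)
      (‖shiftLp p hp' x‖ ^ p.toReal) := lp.hasSum_norm hq _
  have := h1.unique h2
  exact (Real.rpow_left_injOn hq.ne' (norm_nonneg _) (norm_nonneg _) this.symm)

end Stmt5

end Stmt5Aux

noncomputable section Stmt5Main

namespace Stmt5

variable (p : ℝ≥0∞) [Fact (1 ≤ p)]

/-- the "duplicate first coordinate" map, as a linear map on lp -/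
def Llin (hp' : p ≠ ⊤) : lp (fun _ : ℕ => ℝ) p →ₗ[ℝ] lp (fun _ : ℕ => ℝ) p where
  toFun x := lp.single p 0 (x 0) + shiftLp p hp' x
  map_add' x y := by
    ext n
    cases n with
    | zero =>
      simp [lp.coeFn_add, lp.single_apply, shiftLp_apply, shiftFun_zero]
      rfl
    | succ k =>
      simp [lp.coeFn_add, lp.single_apply, shiftLp_apply, shiftFun_succ]
      rfl
  map_smul' c x := by
    ext n
    cases n with
    | zero =>
      simp [lp.coeFn_add, lp.coeFn_smul, lp.single_apply, shiftLp_apply, shiftFun_zero]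
      show c * x 0 = c * (lp.single p 0 (x 0) : lp (fun _ : ℕ => ℝ) p) 0 + c * (shiftLp p hp' x) 0
      simp [lp.single_apply, shiftLp_apply, shiftFun_zero]
    | succ k =>
      simp [lp.coeFn_add, lp.coeFn_smul, lp.single_apply, shiftLp_apply, shiftFun_succ]
      show c * x k = c * (lp.single p 0 (x 0) : lp (fun _ : ℕ => ℝ) p) (k + 1) + c * (shiftLp p hp' x) (k + 1)
      simp [lp.single_apply, shiftLp_apply, shiftFun_succ]

lemma Llin_apply_zero (hp' : p ≠ ⊤) (x : lp (fun _ : ℕ => ℝ) p) :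
    (Llin p hp' x) 0 = x 0 := by
  show (lp.single p 0 (x 0) + shiftLp p hp' x : lp _ p) 0 = x 0
  simp [lp.coeFn_add, lp.single_apply, shiftLp_apply, shiftFun_zero]

lemma Llin_apply_succ (hp' : p ≠ ⊤) (x : lp (fun _ : ℕ => ℝ) p) (n : ℕ) :
    (Llin p hp' x) (n + 1) = x n := by
  show (lp.single p 0 (x 0) + shiftLp p hp' x : lp _ p) (n + 1) = x n
  simp [lp.coeFn_add, lp.single_apply, shiftLp_apply, shiftFun_succ]

lemma Llin_norm_le (hp' : p ≠ ⊤) (x : lp (fun _ : ℕ => ℝ) p) :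
    ‖Llin p hp' x‖ ≤ 2 * ‖x‖ := by
  have hLx : Llin p hp' x = lp.single p 0 (x 0) + shiftLp p hp' x := rfl
  rw [hLx]
  have hq : 0 < p.toReal :=
    ENNReal.toReal_pos (lt_of_lt_of_le zero_lt_one (Fact.out : 1 ≤ p)).ne' hp'
  have h1 : ‖(lp.single p 0 (x 0) : lp (fun _ : ℕ => ℝ) p)‖ = ‖x 0‖ :=
    lp.norm_single (lt_of_lt_of_le zero_lt_one (Fact.out : 1 ≤ p)) 0 _
  have h2 : ‖x 0‖ ≤ ‖x‖ :=
    lp.norm_apply_le_norm (lt_of_lt_of_le zero_lt_one (Fact.out : 1 ≤ p)).ne' x 0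
  have h3 := norm_shiftLp hp' x
  have h4 := norm_add_le (lp.single p 0 (x 0) : lp (fun _ : ℕ => ℝ) p) (shiftLp p hp' x)
  rw [h1, h3] at h4
  linarith

/-- the continuous linear version -/
def LCLM (hp' : p ≠ ⊤) : lp (fun _ : ℕ => ℝ) p →L[ℝ] lp (fun _ : ℕ => ℝ) p :=
  LinearMap.mkContinuous (Llin p hp') 2 (Llin_norm_le p hp')

lemma LCLM_apply_zero (hp' : p ≠ ⊤) (x : lp (fun _ : ℕ => ℝ) p) :
    (LCLM p hp' x) 0 = x 0 :=
  Llin_apply_zero p hp' x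

lemma LCLM_apply_succ (hp' : p ≠ ⊤) (x : lp (fun _ : ℕ => ℝ) p) (n : ℕ) :
    (LCLM p hp' x) (n + 1) = x n :=
  Llin_apply_succ p hp' x n

end Stmt5

end Stmt5Main

open Stmt5 in
/-- In `ℓ^p` (`1 ≤ p < ∞`), the set `C = {x : x₀ ≥ 0}` is closed and
convex, and the map `T(x₁,x₂,…) = (x₁,x₁,x₂,…)` is a continuous self-map of `C`
with fixed point `0`, yet `T` has no attractive point for `C`. -/
theorem stmt_5 (p : ℝ≥0∞) [Fact (1 ≤ p)] (hp' : p ≠ ⊤) :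
    let C : Set (lp (fun _ : ℕ => ℝ) p) := {x | 0 ≤ x 0}
    IsClosed C ∧ Convex ℝ C ∧
    ∃ T : C → C,
      (∀ x : C, ((T x : lp (fun _ : ℕ => ℝ) p) 0 = (x : lp (fun _ : ℕ => ℝ) p) 0) ∧
        ∀ n : ℕ, (T x : lp (fun _ : ℕ => ℝ) p) (n + 1) = (x : lp (fun _ : ℕ => ℝ) p) n) ∧
      Continuous T ∧
      (∃ z : C, (z : lp (fun _ : ℕ => ℝ) p) = 0 ∧ T z = z) ∧
      ¬ ∃ a : lp (fun _ : ℕ => ℝ) p, ∀ x : C,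
          ‖a - (T x : lp (fun _ : ℕ => ℝ) p)‖ ≤ ‖a - (x : lp (fun _ : ℕ => ℝ) p)‖ := by
  intro C
  have hp0 : p ≠ 0 := (lt_of_lt_of_le zero_lt_one Fact.out).ne'
  have hq : 0 < p.toReal := ENNReal.toReal_pos hp0 hp'
  -- continuity of evaluation at 0
  have hev : LipschitzWith 1 (fun x : lp (fun _ : ℕ => ℝ) p => x 0) := by
    apply LipschitzWith.of_dist_le_mul
    intro x y
    rw [NNReal.coe_one, one_mul, dist_eq_norm, dist_eq_norm]
    have : x 0 - y 0 = (x - y) 0 := by simp [lp.coeFn_sub]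
    rw [this]
    exact lp.norm_apply_le_norm hp0 (x - y) 0
  have hclosed : IsClosed C := by
    have : C = (fun x : lp (fun _ : ℕ => ℝ) p => x 0) ⁻¹' Set.Ici 0 := rfl
    rw [this]
    exact IsClosed.preimage hev.continuous isClosed_Ici
  have hconvex : Convex ℝ C := by
    intro x hx y hy a b ha hb hab
    show 0 ≤ (a • x + b • y : lp (fun _ : ℕ => ℝ) p) 0
    have : (a • x + b • y : lp (fun _ : ℕ => ℝ) p) 0 = a * x 0 + b * y 0 := by
      simp only [lp.coeFn_add, lp.coeFn_smul, Pi.add_apply, Pi.smul_apply, smul_eq_mul]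
    rw [this]
    exact add_nonneg (mul_nonneg ha hx) (mul_nonneg hb hy)
  refine ⟨hclosed, hconvex, ?_⟩
  -- define T
  have hTmem : ∀ x : C, (0 : ℝ) ≤ (LCLM p hp' (x : lp (fun _ : ℕ => ℝ) p)) 0 := by
    intro x
    rw [LCLM_apply_zero]
    exact x.2
  refine ⟨fun x => ⟨LCLM p hp' (x : lp (fun _ : ℕ => ℝ) p), hTmem x⟩, ?_, ?_, ?_, ?_⟩
  · intro x
    exact ⟨LCLM_apply_zero p hp' _, LCLM_apply_succ p hp' _⟩
  · exact Continuous.subtype_mk ((LCLM p hp').continuous.comp continuous_subtype_val) _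
  · refine ⟨⟨0, ?_⟩, rfl, ?_⟩
    · show (0:ℝ) ≤ (0 : lp (fun _ : ℕ => ℝ) p) 0
      simp [lp.coeFn_zero]
    · exact Subtype.ext (map_zero (LCLM p hp'))
  · rintro ⟨a, ha⟩
    set t : ℝ := 2 * |a 1| + 1 with ht
    have httpos : (0:ℝ) ≤ t := by positivity
    set x0 : lp (fun _ : ℕ => ℝ) p := lp.single p 0 t with hx0
    have hx0C : x0 ∈ C := by
      show (0:ℝ) ≤ x0 0
      rw [hx0]
      rw [lp.single_apply_self]
      exact httpos
    have key := ha ⟨x0, hx0C⟩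
    set Tx : lp (fun _ : ℕ => ℝ) p := LCLM p hp' x0 with hTx
    -- coordinates
    have hx00 : x0 0 = t := by rw [hx0]; exact lp.single_apply_self (E := fun _ : ℕ => ℝ) p 0 t
    have hx0succ : ∀ k : ℕ, x0 (k + 1) = 0 := by
      intro k; rw [hx0]; exact lp.single_apply_ne (E := fun _ : ℕ => ℝ) p 0 t (Nat.succ_ne_zero k)
    have hcoord : ∀ n : ℕ, n ≠ 1 → (a - Tx) n = (a - x0) n := by
      intro n hn
      have : Tx n = x0 n := by
        match n, hn with
        | 0, _ => rw [hTx, LCLM_apply_zero]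
        | (k+2), _ => rw [hTx, LCLM_apply_succ, hx0succ, hx0succ]
      simp [lp.coeFn_sub, this]
    have hc1 : (a - Tx) 1 = a 1 - t := by
      have : Tx 1 = t := by rw [hTx, LCLM_apply_succ, hx00]
      simp [lp.coeFn_sub, this]
    have hc1' : (a - x0) 1 = a 1 := by
      simp [lp.coeFn_sub, hx0succ 0]
    -- strict comparison at index 1
    have hstrict : ‖(a - x0) 1‖ < ‖(a - Tx) 1‖ := by
      rw [hc1, hc1']
      rw [Real.norm_eq_abs, Real.norm_eq_abs]
      have h1 : t - a 1 ≥ |a 1| + 1 := by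
        have := abs_le.mp (le_refl |a 1|)
        cases abs_cases (a 1) with
        | inl h => rw [ht]; nlinarith [h.1, abs_nonneg (a 1)]
        | inr h => rw [ht]; nlinarith [h.1, abs_nonneg (a 1)]
      have h2 : |a 1 - t| ≥ t - a 1 := by
        rw [abs_sub_comm]
        exact le_abs_self _
      linarith [abs_nonneg (a 1)]
    -- sum comparison
    have hsum1 : HasSum (fun n => ‖(a - x0) n‖ ^ p.toReal) (‖a - x0‖ ^ p.toReal) :=
      lp.hasSum_norm hq _
    have hsum2 : HasSum (fun n => ‖(a - Tx) n‖ ^ p.toReal) (‖a - Tx‖ ^ p.toReal) :=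
      lp.hasSum_norm hq _
    have hle : ∀ n : ℕ, ‖(a - x0) n‖ ^ p.toReal ≤ ‖(a - Tx) n‖ ^ p.toReal := by
      intro n
      by_cases hn : n = 1
      · subst hn
        exact Real.rpow_le_rpow (norm_nonneg _) hstrict.le hq.le
      · rw [hcoord n hn]
    have hlt1 : ‖(a - x0) 1‖ ^ p.toReal < ‖(a - Tx) 1‖ ^ p.toReal :=
      Real.rpow_lt_rpow (norm_nonneg _) hstrict hq
    have hlt : ‖a - x0‖ ^ p.toReal < ‖a - Tx‖ ^ p.toReal := by
      rw [← hsum1.tsum_eq, ← hsum2.tsum_eq]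
      exact Summable.tsum_lt_tsum_of_nonneg (fun n => Real.rpow_nonneg (norm_nonneg _) _)
        hle hlt1 hsum2.summable
    have : ‖a - Tx‖ ^ p.toReal ≤ ‖a - x0‖ ^ p.toReal :=
      Real.rpow_le_rpow (norm_nonneg _) key hq.le
    linarith
end

section
/- A discrete semigroup S has a multiplicative left invariant mean on ℓ^∞(S) if and only if any two elements of S have a common right zero, i.e., for all a, b ∈ S there exists z ∈ S with az = z and bz = z. -/
/-- A bounded real-valued function (element of `ℓ^∞`). -/
def IsBddFn {S : Type*} (f : S → ℝ) : Prop := ∃ M : ℝ, ∀ s, |f s| ≤ M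

open Set Filter Topology
open Fin.NatCast Fin.CommRing

lemma fin3_ne_add_one : ∀ v : Fin 3, v ≠ v + 1 := by decide

lemma fin3_cast_succ (n : ℕ) : ((n + 1 : ℕ) : Fin 3) = (n : Fin 3) + 1 := by
  push_cast; ring

/-- `G` is a good partial coloring for `φ`. -/
def GoodSet {X : Type*} (φ : X → X) (G : Set (X × Fin 3)) : Prop :=
  (∀ x v w, (x, v) ∈ G → (x, w) ∈ G → v = w) ∧
  (∀ x v, (x, v) ∈ G → ∃ w, (φ x, w) ∈ G) ∧
  (∀ x v w, (x, v) ∈ G → (φ x, w) ∈ G → φ x ≠ x → v ≠ w)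

lemma GoodSet.union {X : Type*} {φ : X → X} {M N : Set (X × Fin 3)}
    (hM : GoodSet φ M)
    (hfun : ∀ x v w, (x, v) ∈ N → (x, w) ∈ N → v = w)
    (hnew : ∀ x v, (x, v) ∈ N → ¬ ∃ u, (x, u) ∈ M)
    (hcl : ∀ x v, (x, v) ∈ N → ∃ w, (φ x, w) ∈ M ∪ N)
    (hpr : ∀ x v w, (x, v) ∈ N → (φ x, w) ∈ M ∪ N → φ x ≠ x → v ≠ w) :
    GoodSet φ (M ∪ N) := by
  refine ⟨?_, ?_, ?_⟩
  · rintro x v w (h1 | h1) (h2 | h2)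
    · exact hM.1 x v w h1 h2
    · exact absurd ⟨v, h1⟩ (hnew x w h2)
    · exact absurd ⟨w, h2⟩ (hnew x v h1)
    · exact hfun x v w h1 h2
  · rintro x v (h1 | h1)
    · obtain ⟨w, hw⟩ := hM.2.1 x v h1; exact ⟨w, Or.inl hw⟩
    · exact hcl x v h1
  · rintro x v w (h1 | h1) h2 hne
    · rcases h2 with h2 | h2
      · exact hM.2.2 x v w h1 h2 hne
      · obtain ⟨u, hu⟩ := hM.2.1 x v h1
        exact absurd ⟨u, hu⟩ (hnew _ w h2)
    · exact hpr x v w h1 h2 hne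

theorem exists_three_coloring {X : Type*} (φ : X → X) :
    ∃ c : X → Fin 3, ∀ x, φ x ≠ x → c (φ x) ≠ c x := by
  obtain ⟨M, hM, hmax⟩ : ∃ M, GoodSet φ M ∧ ∀ G, GoodSet φ G → M ⊆ G → G ⊆ M := by
    obtain ⟨M, hM⟩ := zorn_subset {G | GoodSet φ G} (fun c hc hchain => by
      refine ⟨⋃₀ c, ⟨?_, ?_, ?_⟩, fun s hs => subset_sUnion_of_mem hs⟩
      · rintro x v w ⟨G₁, hG₁, h1⟩ ⟨G₂, hG₂, h2⟩
        rcases hchain.total hG₁ hG₂ with h | h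
        · exact (hc hG₂).1 x v w (h h1) h2
        · exact (hc hG₁).1 x v w h1 (h h2)
      · rintro x v ⟨G₁, hG₁, h1⟩
        obtain ⟨w, hw⟩ := (hc hG₁).2.1 x v h1
        exact ⟨w, G₁, hG₁, hw⟩
      · rintro x v w ⟨G₁, hG₁, h1⟩ ⟨G₂, hG₂, h2⟩ hne
        rcases hchain.total hG₁ hG₂ with h | h
        · exact (hc hG₂).2.2 x v w (h h1) h2 hne
        · exact (hc hG₁).2.2 x v w h1 (h h2) hne)
    exact ⟨M, hM.1, fun G hG hMG => hM.2 hG hMG⟩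
  by_cases hfull : ∀ x, ∃ v, (x, v) ∈ M
  · choose c hc using hfull
    exact ⟨c, fun x hx => (hM.2.2 x (c x) (c (φ x)) (hc x) (hc (φ x)) hx).symm⟩
  push_neg at hfull
  obtain ⟨x₀, hx₀⟩ := hfull
  exfalso
  have hmaxmem : ∀ N, GoodSet φ (M ∪ N) → ∀ p ∈ N, p ∈ M := by
    intro N hG p hp
    exact hmax _ hG subset_union_left (Or.inr hp)
  -- Step 1: for any uncolored x, φ x is uncolored and x is not a fixed point.
  have hstep : ∀ x, (¬ ∃ v, (x, v) ∈ M) → (¬ ∃ v, (φ x, v) ∈ M) ∧ φ x ≠ x := by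
    intro x hx
    by_contra hcon
    have hcase : (∃ w, (φ x, w) ∈ M) ∨ φ x = x := by tauto
    have key : ∃ v : Fin 3, GoodSet φ (M ∪ {(x, v)}) := by
      rcases hcase with ⟨w, hw⟩ | hfix
      · refine ⟨w + 1, hM.union ?_ ?_ ?_ ?_⟩
        · rintro y v u h1 h2
          simp only [Set.mem_singleton_iff, Prod.mk.injEq] at h1 h2
          rw [h1.2, h2.2]
        · rintro y v h1
          simp only [Set.mem_singleton_iff, Prod.mk.injEq] at h1
          exact h1.1 ▸ hx
        · rintro y v h1
          simp only [Set.mem_singleton_iff, Prod.mk.injEq] at h1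
          obtain ⟨rfl, rfl⟩ := h1
          exact ⟨w, Or.inl hw⟩
        · rintro y v u h1 h2 hne
          simp only [Set.mem_singleton_iff, Prod.mk.injEq] at h1
          obtain ⟨rfl, rfl⟩ := h1
          rcases h2 with h2 | h2
          · have : u = w := hM.1 _ u w h2 hw
            rw [this]
            exact (fin3_ne_add_one w).symm
          · simp only [Set.mem_singleton_iff, Prod.mk.injEq] at h2
            exact absurd h2.1 hne
      · refine ⟨0, hM.union ?_ ?_ ?_ ?_⟩
        · rintro y v u h1 h2
          simp only [Set.mem_singleton_iff, Prod.mk.injEq] at h1 h2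
          rw [h1.2, h2.2]
        · rintro y v h1
          simp only [Set.mem_singleton_iff, Prod.mk.injEq] at h1
          exact h1.1 ▸ hx
        · rintro y v h1
          simp only [Set.mem_singleton_iff, Prod.mk.injEq] at h1
          obtain ⟨rfl, rfl⟩ := h1
          exact ⟨0, Or.inr (by rw [hfix]; rfl)⟩
        · rintro y v u h1 h2 hne
          simp only [Set.mem_singleton_iff, Prod.mk.injEq] at h1
          obtain ⟨rfl, rfl⟩ := h1
          exact absurd hfix hne
    obtain ⟨v, hv⟩ := key
    exact hx ⟨v, hmaxmem _ hv (x, v) rfl⟩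
  -- the orbit of x₀
  set o : ℕ → X := fun n => φ^[n] x₀ with ho
  have hosucc : ∀ n, o (n + 1) = φ (o n) := fun n => Function.iterate_succ_apply' φ n x₀
  have horb : ∀ n, ¬ ∃ v, (o n, v) ∈ M := by
    intro n
    induction n with
    | zero => exact fun ⟨v, hv⟩ => hx₀ v hv
    | succ k ih => rw [hosucc]; exact (hstep _ ih).1
  have hne : ∀ n, φ (o n) ≠ o n := fun n => (hstep _ (horb n)).2
  by_cases hinj : ∀ p q : ℕ, o p = o q → p = q
  · -- injective orbit: color by k mod 3
    set N : Set (X × Fin 3) := {p | ∃ k : ℕ, p = (o k, (k : Fin 3))} with hN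
    have hG : GoodSet φ (M ∪ N) := by
      refine hM.union ?_ ?_ ?_ ?_
      · rintro x v w ⟨k, hk⟩ ⟨l, hl⟩
        simp only [Prod.mk.injEq] at hk hl
        obtain ⟨rfl, rfl⟩ := hk
        obtain ⟨he, rfl⟩ := hl
        rw [hinj _ _ he]
      · rintro x v ⟨k, hk⟩
        simp only [Prod.mk.injEq] at hk
        obtain ⟨rfl, rfl⟩ := hk
        exact horb k
      · rintro x v ⟨k, hk⟩
        simp only [Prod.mk.injEq] at hk
        obtain ⟨rfl, rfl⟩ := hk
        exact ⟨((k+1 : ℕ) : Fin 3), Or.inr ⟨k + 1, by rw [hosucc]⟩⟩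
      · rintro x v w ⟨k, hk⟩ h2 hnef
        simp only [Prod.mk.injEq] at hk
        obtain ⟨rfl, rfl⟩ := hk
        rcases h2 with h2 | h2
        · exact absurd ⟨w, (hosucc k ▸ h2 : (o (k+1), w) ∈ M)⟩ (horb (k + 1))
        · obtain ⟨l, hl⟩ := h2
          simp only [Prod.mk.injEq] at hl
          obtain ⟨he, rfl⟩ := hl
          have : l = k + 1 := hinj _ _ (by rw [← he, hosucc])
          subst this
          rw [fin3_cast_succ]
          exact fin3_ne_add_one _
    have := hmaxmem _ hG (o 0, ((0:ℕ) : Fin 3)) ⟨0, rfl⟩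
    exact horb 0 ⟨_, this⟩
  · -- eventually periodic orbit
    push_neg at hinj
    have hrep : ∃ n : ℕ, ∃ i, i < n ∧ o i = o n := by
      obtain ⟨p, q, hpq, hne'⟩ := hinj
      rcases lt_or_gt_of_ne hne' with h | h
      · exact ⟨q, p, h, hpq⟩
      · exact ⟨p, q, h, hpq.symm⟩
    classical
    obtain ⟨j, ⟨i, hij, hoij⟩, hjmin⟩ :
        ∃ j : ℕ, (∃ i, i < j ∧ o i = o j) ∧ ∀ q, q < j → ¬ ∃ p, p < q ∧ o p = o q :=
      ⟨Nat.find hrep, Nat.find_spec hrep, fun q hq => Nat.find_min hrep hq⟩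
    have hinjlt : ∀ p q, p < j → q < j → o p = o q → p = q := by
      intro p q hp hq he
      by_contra hpq
      rcases lt_or_gt_of_ne hpq with h | h
      · exact hjmin q hq ⟨p, h, he⟩
      · exact hjmin p hp ⟨q, h, he.symm⟩
    have hL : i + 2 ≤ j := by
      rcases Nat.lt_or_ge (i + 1) j with h | h
      · omega
      · have hj1 : j = i + 1 := by omega
        have : φ (o i) = o i := by rw [← hosucc, ← hj1, ← hoij]
        exact absurd this (hne i)
    -- the coloring of indices
    set col : ℕ → Fin 3 := fun k =>
      if k < i then ((i - k : ℕ) : Fin 3)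
      else if k = j - 1 ∧ Odd (j - i) then 2
      else (if (k - i) % 2 = 0 then 0 else 1) with hcol
    have hcoli : col i = 0 := by
      simp only [hcol]
      rw [if_neg (lt_irrefl i), if_neg (by rintro ⟨h, -⟩; omega), if_pos (by simp)]
    have hC1 : ∀ k, k + 1 < j → col k ≠ col (k + 1) := by
      intro k hk
      rcases Nat.lt_or_ge (k + 1) i with h | h
      · have h1 : col k = ((i - k : ℕ) : Fin 3) := if_pos (by omega)
        have h2 : col (k+1) = ((i - (k+1) : ℕ) : Fin 3) := if_pos h
        have h3 : (i - k : ℕ) = (i - (k+1)) + 1 := by omega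
        rw [h1, h2, h3, fin3_cast_succ]
        exact (fin3_ne_add_one _).symm
      rcases Nat.eq_or_lt_of_le h with h' | h'
      · -- i = k + 1
        have h1 : col k = ((i - k : ℕ) : Fin 3) := if_pos (by omega)
        have h4 : (i - k : ℕ) = 1 := by omega
        have h2 : col (k+1) = 0 := by rw [← h']; exact hcoli
        rw [h1, h4, h2]
        decide
      · have hknot : ¬ k < i := by omega
        have hk1not : ¬ k + 1 < i := by omega
        have hknotlast : ¬ (k = j - 1 ∧ Odd (j - i)) := by rintro ⟨h'', -⟩; omega
        have h1 : col k = (if (k - i) % 2 = 0 then 0 else 1) := by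
          rw [hcol]; simp only; rw [if_neg hknot, if_neg hknotlast]
        by_cases hlast : k + 1 = j - 1 ∧ Odd (j - i)
        · have h2 : col (k+1) = 2 := by rw [hcol]; simp only; rw [if_neg hk1not, if_pos hlast]
          rw [h1, h2]
          split <;> decide
        · have h2 : col (k+1) = (if (k + 1 - i) % 2 = 0 then 0 else 1) := by
            rw [hcol]; simp only; rw [if_neg hk1not, if_neg hlast]
          rw [h1, h2]
          rcases Nat.mod_two_eq_zero_or_one (k - i) with hp | hp
          · rw [if_pos hp, if_neg (by omega)]; decide
          · rw [if_neg (by omega), if_pos (by omega)]; decide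
    have hC2 : col (j - 1) ≠ col i := by
      rw [hcoli]
      have hnotlt : ¬ j - 1 < i := by omega
      by_cases hodd : Odd (j - i)
      · have : col (j-1) = 2 := by
          rw [hcol]; beta_reduce; rw [if_neg hnotlt, if_pos ⟨rfl, hodd⟩]
        rw [this]; decide
      · have hpar : (j - 1 - i) % 2 = 1 := by
          rw [Nat.odd_iff] at hodd
          omega
        have : col (j-1) = 1 := by
          rw [hcol]; simp only
          rw [if_neg hnotlt, if_neg (by rintro ⟨-, h⟩; exact hodd h), if_neg (by omega)]
        rw [this]; decide
    -- the new set
    set N : Set (X × Fin 3) := {p | ∃ k : ℕ, k < j ∧ p = (o k, col k)} with hN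
    have hG : GoodSet φ (M ∪ N) := by
      refine hM.union ?_ ?_ ?_ ?_
      · rintro x v w ⟨k, hk, hpk⟩ ⟨l, hl, hpl⟩
        simp only [Prod.mk.injEq] at hpk hpl
        obtain ⟨rfl, rfl⟩ := hpk
        obtain ⟨he, rfl⟩ := hpl
        rw [hinjlt _ _ hk hl he]
      · rintro x v ⟨k, hk, hpk⟩
        simp only [Prod.mk.injEq] at hpk
        obtain ⟨rfl, rfl⟩ := hpk
        exact horb k
      · rintro x v ⟨k, hk, hpk⟩
        simp only [Prod.mk.injEq] at hpk
        obtain ⟨rfl, rfl⟩ := hpk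
        rcases Nat.lt_or_ge (k + 1) j with h | h
        · exact ⟨col (k+1), Or.inr ⟨k + 1, h, by rw [hosucc]⟩⟩
        · have hkj : k + 1 = j := by omega
          refine ⟨col i, Or.inr ⟨i, hij, ?_⟩⟩
          rw [← hosucc, hkj, ← hoij]
      · rintro x v w ⟨k, hk, hpk⟩ h2 hnef
        simp only [Prod.mk.injEq] at hpk
        obtain ⟨rfl, rfl⟩ := hpk
        rcases h2 with h2 | h2
        · exact absurd ⟨w, (hosucc k ▸ h2 : (o (k+1), w) ∈ M)⟩ (horb (k + 1))
        · obtain ⟨l, hl, hpl⟩ := h2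
          simp only [Prod.mk.injEq] at hpl
          obtain ⟨he, rfl⟩ := hpl
          rw [← hosucc] at he
          rcases Nat.lt_or_ge (k + 1) j with h | h
          · have : l = k + 1 := hinjlt _ _ hl h he.symm
            subst this
            exact hC1 k h
          · have hkj : k + 1 = j := by omega
            have hoi : o l = o i := by rw [← he, hkj, ← hoij]
            have : l = i := hinjlt _ _ hl hij hoi
            subst this
            have hk1 : k = j - 1 := by omega
            rw [hk1]
            exact hC2
    have h0j : 0 < j := by omega
    have := hmaxmem _ hG (o 0, col 0) ⟨0, h0j, rfl⟩
    exact horb 0 ⟨_, this⟩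

/-- Granirer: A discrete semigroup `S` admits a multiplicative left
invariant mean on `ℓ^∞(S)` iff any two elements of `S` have a common right zero. -/
theorem stmt_11 {S : Type*} [Semigroup S] [Nonempty S] :
    (∃ m : (S → ℝ) → ℝ,
      (∀ f g : S → ℝ, IsBddFn f → IsBddFn g → m (fun s => f s + g s) = m f + m g) ∧
      (∀ (c : ℝ) (f : S → ℝ), IsBddFn f → m (fun s => c * f s) = c * m f) ∧
      (m (fun _ => 1) = 1) ∧
      (∀ f : S → ℝ, IsBddFn f → |m f| ≤ ⨆ s, |f s|) ∧
      (∀ f g : S → ℝ, IsBddFn f → IsBddFn g → m (fun s => f s * g s) = m f * m g) ∧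
      (∀ (a : S) (f : S → ℝ), IsBddFn f → m (fun s => f (a * s)) = m f)) ↔
    (∀ a b : S, ∃ z : S, a * z = z ∧ b * z = z) := by
  classical
  constructor
  · rintro ⟨m, hadd, hsmul, hone, hbnd, hmul, hinv⟩ a b
    set χ : Set S → S → ℝ := fun A s => if s ∈ A then 1 else 0 with hχ
    have hbd : ∀ A : Set S, IsBddFn (χ A) := by
      intro A
      refine ⟨1, fun s => ?_⟩
      simp only [hχ]
      split <;> norm_num
    set P : Set S → Prop := fun A => m (χ A) = 1 with hP
    have hidem : ∀ A, m (χ A) = 0 ∨ m (χ A) = 1 := by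
      intro A
      have h1 : (fun s => χ A s * χ A s) = χ A := by
        funext s; simp only [hχ]; split <;> ring
      have h2 := hmul (χ A) (χ A) (hbd A) (hbd A)
      rw [h1] at h2
      have h3 : m (χ A) * (m (χ A) - 1) = 0 := by rw [mul_sub, mul_one]; linarith
      rcases mul_eq_zero.1 h3 with h4 | h4
      · exact Or.inl h4
      · exact Or.inr (by linarith)
    have hempty : ¬ P ∅ := by
      have h1 : χ (∅ : Set S) = fun s => (0:ℝ) * (fun _ => (1:ℝ)) s := by
        funext s; simp [hχ]
      have h2 : m (χ ∅) = 0 := by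
        rw [h1, hsmul 0 (fun _ => 1) ⟨1, by norm_num⟩]
        ring
      simp only [hP, h2]
      norm_num
    have hne : ∀ A, P A → A.Nonempty := by
      intro A hA
      rcases A.eq_empty_or_nonempty with rfl | h
      · exact absurd hA hempty
      · exact h
    have hinter : ∀ A B, P A → P B → P (A ∩ B) := by
      intro A B hA hB
      have h1 : (fun s => χ A s * χ B s) = χ (A ∩ B) := by
        funext s; simp only [hχ, mem_inter_iff]
        by_cases h1 : s ∈ A <;> by_cases h2 : s ∈ B <;> simp [h1, h2]
      have h2 := hmul (χ A) (χ B) (hbd A) (hbd B)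
      rw [h1] at h2
      simp only [hP] at *
      rw [h2, hA, hB]; ring
    have hor : ∀ A, P A ∨ P Aᶜ := by
      intro A
      have hsum : m (χ A) + m (χ Aᶜ) = 1 := by
        have h1 : (fun s => χ A s + χ Aᶜ s) = fun _ => (1:ℝ) := by
          funext s; simp only [hχ, mem_compl_iff]
          by_cases h : s ∈ A <;> simp [h]
        have h2 := hadd (χ A) (χ Aᶜ) (hbd A) (hbd Aᶜ)
        rw [h1, hone] at h2
        exact h2.symm
      rcases hidem A with h | h
      · right; simp only [hP]; rw [h, zero_add] at hsum; exact hsum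
      · left; exact h
    have hinvP : ∀ (c : S) (A : Set S), P {s | c * s ∈ A} ↔ P A := by
      intro c A
      have h1 : χ {s | c * s ∈ A} = fun s => χ A (c * s) := by
        funext s; simp only [hχ, mem_setOf_eq]
      simp only [hP, h1]
      rw [hinv c (χ A) (hbd A)]
    -- key: P (fixed points of left multiplication)
    have hfix : ∀ c : S, P {z | c * z = z} := by
      intro c
      rcases hor {z | c * z = z} with h | h
      · exact h
      exfalso
      obtain ⟨col, hcol⟩ := exists_three_coloring (fun s : S => c * s)
      have hexi : ∃ i : Fin 3, P (col ⁻¹' {i}) := by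
        rcases hor (col ⁻¹' {0}) with h0 | h0
        · exact ⟨0, h0⟩
        rcases hor (col ⁻¹' {1}) with h1 | h1
        · exact ⟨1, h1⟩
        refine ⟨2, ?_⟩
        have hsub : (col ⁻¹' {0})ᶜ ∩ (col ⁻¹' {1})ᶜ ⊆ col ⁻¹' {2} := by
          intro x ⟨hx0, hx1⟩
          simp only [mem_compl_iff, mem_preimage, mem_singleton_iff] at *
          omega
        have := hinter _ _ h0 h1
        -- monotonicity
        have hmono : ∀ A B : Set S, A ⊆ B → P A → P B := by
          intro A B hAB hA
          have h1 : (fun s => χ A s * χ B s) = χ A := by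
            funext s; simp only [hχ]
            by_cases h1 : s ∈ A
            · simp [h1, hAB h1]
            · simp [h1]
          have h2 := hmul (χ A) (χ B) (hbd A) (hbd B)
          rw [h1] at h2
          simp only [hP] at *
          rcases hidem B with h3 | h3
          · rw [hA, h3] at h2; norm_num at h2
          · exact h3
        exact hmono _ _ hsub this
      obtain ⟨i, hi⟩ := hexi
      have h2 : P {s | c * s ∈ col ⁻¹' {i}} := (hinvP c _).2 hi
      have h3 := hinter _ _ (hinter _ _ hi h2) h
      obtain ⟨x, ⟨hx1, hx2⟩, hx3⟩ := hne _ h3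
      simp only [mem_preimage, mem_singleton_iff, mem_setOf_eq, mem_compl_iff] at hx1 hx2 hx3
      exact hcol x hx3 (by rw [hx2, hx1])
    obtain ⟨z, hz1, hz2⟩ := hne _ (hinter _ _ (hfix a) (hfix b))
    exact ⟨z, hz1, hz2⟩
  · intro h
    -- the sets of common right zeros form a filter basis
    set Z : S → Set S := fun a => {z | a * z = z} with hZ
    have hZne : ∀ a, (Z a).Nonempty := fun a => (h a a).imp (fun z hz => hz.1)
    have hdir : Directed (· ≥ ·) (fun a => (𝓟 (Z a) : Filter S)) := by
      intro a b
      obtain ⟨z, hza, hzb⟩ := h a b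
      refine ⟨z, principal_mono.2 ?_, principal_mono.2 ?_⟩
      · intro w hw
        show a * w = w
        calc a * w = a * (z * w) := by rw [hw]
        _ = (a * z) * w := (mul_assoc a z w).symm
        _ = z * w := by rw [hza]
        _ = w := hw
      · intro w hw
        show b * w = w
        calc b * w = b * (z * w) := by rw [hw]
        _ = (b * z) * w := (mul_assoc b z w).symm
        _ = z * w := by rw [hzb]
        _ = w := hw
    have hFne : (⨅ a, 𝓟 (Z a) : Filter S).NeBot :=
      iInf_neBot_of_directed hdir (fun a => principal_neBot_iff.2 (hZne a))
    set U : Ultrafilter S := @Ultrafilter.of S (⨅ a, 𝓟 (Z a)) hFne with hU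
    have hZU : ∀ a, Z a ∈ U := fun a =>
      Ultrafilter.of_le _ (mem_iInf_of_mem a (mem_principal_self _))
    set m : (S → ℝ) → ℝ := fun f => limUnder (U : Filter S) f with hm
    have htends : ∀ f : S → ℝ, IsBddFn f → Tendsto f (U : Filter S) (𝓝 (m f)) := by
      rintro f ⟨M, hM⟩
      have h1 : (U.map f : Filter ℝ) ≤ 𝓟 (Set.Icc (-M) M) := by
        rw [le_principal_iff, Ultrafilter.coe_map, mem_map]
        refine mem_of_superset univ_mem fun s _ => ?_
        have := abs_le.1 (hM s)
        exact ⟨this.1, this.2⟩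
      obtain ⟨x, -, hx⟩ := isCompact_Icc.ultrafilter_le_nhds (U.map f) h1
      rw [Ultrafilter.coe_map] at hx
      exact tendsto_nhds_limUnder ⟨x, hx⟩
    have hbdd_mul : ∀ (f g : S → ℝ), IsBddFn f → IsBddFn g → IsBddFn (fun s => f s * g s) := by
      rintro f g ⟨M, hM⟩ ⟨N, hN⟩
      refine ⟨M * N, fun s => ?_⟩
      rw [abs_mul]
      exact mul_le_mul (hM s) (hN s) (abs_nonneg _) ((abs_nonneg (f s)).trans (hM s))
    refine ⟨m, ?_, ?_, ?_, ?_, ?_, ?_⟩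
    · rintro f g hf hg
      refine tendsto_nhds_unique (htends _ ?_) ((htends f hf).add (htends g hg))
      obtain ⟨M, hM⟩ := hf; obtain ⟨N, hN⟩ := hg
      exact ⟨M + N, fun s => (abs_add_le _ _).trans (add_le_add (hM s) (hN s))⟩
    · rintro c f hf
      refine tendsto_nhds_unique (htends _ ?_) ((htends f hf).const_mul c)
      obtain ⟨M, hM⟩ := hf
      refine ⟨|c| * M, fun s => ?_⟩
      rw [abs_mul]
      exact mul_le_mul_of_nonneg_left (hM s) (abs_nonneg c)
    · exact tendsto_nhds_unique (htends _ ⟨1, fun s => by norm_num⟩) tendsto_const_nhds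
    · rintro f hf
      obtain ⟨M, hM⟩ := hf
      have hbd : BddAbove (Set.range fun s => |f s|) := ⟨M, by rintro x ⟨s, rfl⟩; exact hM s⟩
      have hle : ∀ s, |f s| ≤ ⨆ s, |f s| := fun s => le_ciSup hbd s
      have hmem : m f ∈ Set.Icc (-(⨆ s, |f s|)) (⨆ s, |f s|) := by
        refine isClosed_Icc.mem_of_tendsto (htends f ⟨M, hM⟩) (Eventually.of_forall fun s => ?_)
        have := abs_le.1 (hle s)
        exact ⟨this.1, this.2⟩
      exact abs_le.2 ⟨hmem.1, hmem.2⟩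
    · rintro f g hf hg
      exact tendsto_nhds_unique (htends _ (hbdd_mul f g hf hg)) ((htends f hf).mul (htends g hg))
    · rintro a f hf
      have hev : (fun s => f (a * s)) =ᶠ[(U : Filter S)] f :=
        eventually_of_mem (hZU a) (fun z hz => congrArg f hz)
      refine tendsto_nhds_unique (htends _ ?_) ((htends f hf).congr' hev.symm)
      obtain ⟨M, hM⟩ := hf
      exact ⟨M, fun s => hM (a * s)⟩
end

section
/- Let S be a discrete semigroup with the property that every finite subset σ of S admits an element s_σ ∈ S with s·s_σ = s_σ for all s ∈ σ (extreme left amenability in Granirer's form). Let C be a weakly closed subset of a Banach space E and let {T_s : s ∈ S} be a representation of S on C by weakly continuous maps such that the orbit {T_s c : s ∈ S} of some c ∈ C is relatively weakly compact. Then C contains a common fixed point for S. -/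
theorem weakSpace_t2 {E : Type*} [NormedAddCommGroup E] [NormedSpace ℝ E] :
    T2Space (WeakSpace ℝ E) := by
  constructor
  intro x y hxy
  have : ¬ ∀ g : E →L[ℝ] ℝ, g ((toWeakSpace ℝ E).symm x) = g ((toWeakSpace ℝ E).symm y) := by
    intro h
    exact hxy ((toWeakSpace ℝ E).symm.injective
      ((NormedSpace.eq_iff_forall_dual_eq ℝ).mpr h))
  push_neg at this
  obtain ⟨g, hg⟩ := this
  exact separated_by_continuous
    (f := fun v : WeakSpace ℝ E => g ((toWeakSpace ℝ E).symm v))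
    (WeakBilin.eval_continuous (topDualPairing ℝ E).flip g) hg

/-- If every finite subset of a discrete semigroup `S` has a common
right zero (extreme left amenability), then any weakly continuous representation of
`S` on a weakly closed subset `C` of a Banach space whose orbit of some `c ∈ C` is
relatively weakly compact has a common fixed point in `C`. -/
theorem stmt_12 {E : Type*} [NormedAddCommGroup E] [NormedSpace ℝ E] [CompleteSpace E]
    {S : Type*} [Semigroup S]
    (hELA : ∀ σ : Finset S, ∃ z : S, ∀ s ∈ σ, s * z = z)
    (C : Set (WeakSpace ℝ E)) (hC : IsClosed C)
    (T : S → WeakSpace ℝ E → WeakSpace ℝ E)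
    (hmaps : ∀ s, Set.MapsTo (T s) C C)
    (hrep : ∀ s t : S, ∀ x ∈ C, T (s * t) x = T s (T t x))
    (hcont : ∀ s, ContinuousOn (T s) C)
    (c : WeakSpace ℝ E) (hc : c ∈ C)
    (horb : IsCompact (closure {x | ∃ s : S, x = T s c})) :
    ∃ x ∈ C, ∀ s : S, T s x = x := by
  classical
  haveI : T2Space (WeakSpace ℝ E) := weakSpace_t2
  set K := closure {x | ∃ s : S, x = T s c} with hK
  -- fixed point sets
  have hFs : ∀ s : S, IsClosed {x ∈ C | T s x = x} :=
    fun s => hC.isClosed_eq (hcont s) continuousOn_id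
  set Z : Finset S → Set (WeakSpace ℝ E) :=
    fun σ => (C ∩ K) ∩ ⋂ s ∈ σ, {x ∈ C | T s x = x} with hZ
  have hZclosed : ∀ σ, IsClosed (Z σ) := fun σ =>
    ((hC.inter isClosed_closure).inter
      (isClosed_biInter fun s _ => hFs s))
  have hZsubK : ∀ σ, Z σ ⊆ K := fun σ x hx => hx.1.2
  have hZcompact : ∀ σ, IsCompact (Z σ) := fun σ =>
    horb.of_isClosed_subset (hZclosed σ) (hZsubK σ)
  have hZnonempty : ∀ σ, (Z σ).Nonempty := by
    intro σ
    obtain ⟨z, hz⟩ := hELA σ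
    refine ⟨T z c, ⟨hmaps z hc, subset_closure ⟨z, rfl⟩⟩, ?_⟩
    simp only [Set.mem_iInter, Set.mem_setOf_eq]
    intro s hs
    refine ⟨hmaps z hc, ?_⟩
    rw [← hrep s z c hc, hz s hs]
  have hdir : Directed (fun x1 x2 => x1 ⊇ x2) Z := by
    intro σ τ
    refine ⟨σ ∪ τ, ?_, ?_⟩ <;>
    · intro x hx
      refine ⟨hx.1, ?_⟩
      have := hx.2
      simp only [Set.mem_iInter, Set.mem_setOf_eq] at this ⊢
      intro s hs
      exact this s (by simp [hs])
  have := IsCompact.nonempty_iInter_of_directed_nonempty_isCompact_isClosed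
    Z hdir hZnonempty hZcompact hZclosed
  obtain ⟨x, hx⟩ := this
  simp only [Set.mem_iInter] at hx
  refine ⟨x, (hx ∅).1.1, fun s => ?_⟩
  have := (hx {s}).2
  simp only [Set.mem_iInter, Set.mem_setOf_eq] at this
  exact (this s (Finset.mem_singleton_self s)).2
end

section
/- Let S be a left reversible semitopological semigroup, let Γ be the collection of all closed right ideals of S, and let ν be a submean on a left invariant positively semilinear subset X of LUC(S) containing positive constants. Then μ(f) = inf_{J ∈ Γ} sup_{s ∈ J} ν(ℓ_s f) defines a left subinvariant submean on X, and μ is strictly increasing whenever ν is. -/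
/-- For a left reversible semitopological semigroup `S` and a submean
`ν` on a left invariant positively semilinear subset `X` of `LUC(S)` containing the
positive constants, `μ(f) = inf_{J ∈ Γ} sup_{s ∈ J} ν(ℓ_s f)` (infimum over the
closed right ideals `J` of `S`) is a left subinvariant submean on `X`, which is
strictly increasing whenever `ν` is. -/
theorem stmt_15 {S : Type*} [Semigroup S] [TopologicalSpace S]
    (hls : ∀ a : S, Continuous fun x => a * x)
    (hrs : ∀ a : S, Continuous fun x => x * a)
    (hlr : ∀ a b : S,
      (closure (Set.range fun s => a * s) ∩ closure (Set.range fun s => b * s)).Nonempty)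
    (X : Set (S → ℝ))
    (hXb : ∀ f ∈ X, ∃ M : ℝ, ∀ s, |f s| ≤ M)
    (hXluc : ∀ f ∈ X, Continuous f ∧
      ∀ s₀ : S, ∀ ε > (0 : ℝ), ∀ᶠ s in nhds s₀, ∀ t, |f (s * t) - f (s₀ * t)| ≤ ε)
    (hXsl : ∀ f ∈ X, ∀ g ∈ X, ∀ α β : ℝ, 0 ≤ α → 0 ≤ β →
      (fun t => α * f t + β * g t) ∈ X)
    (hXc : ∀ c : ℝ, 0 < c → (fun _ => c) ∈ X)
    (hXinv : ∀ s : S, ∀ f ∈ X, (fun t => f (s * t)) ∈ X)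
    (ν : (S → ℝ) → ℝ)
    (hν1 : ∀ f ∈ X, ∀ g₁ ∈ X, ∀ g₂ ∈ X, ∀ α β : ℝ,
      α ∈ Set.Icc (0 : ℝ) 1 → β ∈ Set.Icc (0 : ℝ) 1 →
      (∀ t, f t ≤ α * g₁ t + β * g₂ t) → ν f ≤ α * ν g₁ + β * ν g₂)
    (hν2 : ∀ c : ℝ, 0 < c → ν (fun _ => c) = c) :
    let Γ : Set (Set S) := {J | J.Nonempty ∧ IsClosed J ∧ ∀ x ∈ J, ∀ s : S, x * s ∈ J}
    let μ : (S → ℝ) → ℝ := fun f => ⨅ J : Γ, ⨆ s : J.1, ν fun t => f (s.1 * t)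
    ((∀ f ∈ X, ∀ g₁ ∈ X, ∀ g₂ ∈ X, ∀ α β : ℝ,
        α ∈ Set.Icc (0 : ℝ) 1 → β ∈ Set.Icc (0 : ℝ) 1 →
        (∀ t, f t ≤ α * g₁ t + β * g₂ t) → μ f ≤ α * μ g₁ + β * μ g₂) ∧
      (∀ c : ℝ, 0 < c → μ (fun _ => c) = c) ∧
      (∀ s : S, ∀ f ∈ X, μ f ≤ μ fun t => f (s * t))) ∧
    ((∀ c : ℝ, 0 < c → ∃ δ > (0 : ℝ), ∀ f ∈ X, ν f + δ ≤ ν fun t => f t + c) →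
      (∀ c : ℝ, 0 < c → ∃ δ > (0 : ℝ), ∀ f ∈ X, μ f + δ ≤ μ fun t => f t + c)) := by
  intro Γ μ
  rcases isEmpty_or_nonempty S with hS | hS
  · exfalso
    have h1 := hν2 1 one_pos
    have h2 := hν2 2 two_pos
    have he : (fun _ : S => (1 : ℝ)) = fun _ : S => (2 : ℝ) :=
      funext fun s => (hS.false s).elim
    rw [he, h2] at h1
    norm_num at h1
  obtain ⟨a0⟩ := hS
  -- monotonicity of ν up to ε
  have νmono_eps : ∀ g ∈ X, ∀ h ∈ X, ∀ ε : ℝ, 0 < ε →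
      (∀ t, g t ≤ h t + ε) → ν g ≤ ν h + ε := by
    intro g hg h hh ε hε hle
    have h0 := hν1 g hg h hh (fun _ => ε) (hXc ε hε) 1 1
      ⟨zero_le_one, le_refl 1⟩ ⟨zero_le_one, le_refl 1⟩
      (fun t => by show g t ≤ 1 * h t + 1 * ε; linarith [hle t])
    rw [hν2 ε hε] at h0
    linarith
  have νmono : ∀ g ∈ X, ∀ h ∈ X, (∀ t, g t ≤ h t) → ν g ≤ ν h := by
    intro g hg h hh hle
    exact le_of_forall_pos_le_add fun ε hε =>
      νmono_eps g hg h hh ε hε fun t => by linarith [hle t]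
  -- bounds for ν
  have νub : ∀ g ∈ X, ∀ M : ℝ, (∀ t, |g t| ≤ M) → ν g ≤ M + 1 := by
    intro g hg M hM
    have hM0 : (0 : ℝ) ≤ M := le_trans (abs_nonneg _) (hM a0)
    have hc : (fun _ : S => M + 1) ∈ X := hXc _ (by linarith)
    have h0 := νmono g hg _ hc fun t => by
      have := (abs_le.mp (hM t)).2; linarith
    rw [hν2 (M + 1) (by linarith)] at h0
    exact h0
  have νlb : ∀ g ∈ X, ∀ M : ℝ, (∀ t, |g t| ≤ M) → -M ≤ ν g := by
    intro g hg M hM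
    have hM0 : (0 : ℝ) ≤ M := le_trans (abs_nonneg _) (hM a0)
    have hc1 : (fun _ : S => (1 : ℝ)) ∈ X := hXc 1 one_pos
    have hc : (fun _ : S => M + 1) ∈ X := hXc _ (by linarith)
    have h1 := hν1 _ hc1 g hg _ hc 1 1
      ⟨zero_le_one, le_refl 1⟩ ⟨zero_le_one, le_refl 1⟩
      (fun t => by
        show (1 : ℝ) ≤ 1 * g t + 1 * (M + 1)
        have := (abs_le.mp (hM t)).1; linarith)
    rw [hν2 1 one_pos, hν2 (M + 1) (by linarith)] at h1
    linarith
  -- closed right ideals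
  have hclosΓ : ∀ T : Set S, T.Nonempty → (∀ x ∈ T, ∀ s : S, x * s ∈ T) →
      closure T ∈ Γ := by
    intro T hTne hTid
    refine ⟨hTne.mono subset_closure, isClosed_closure, ?_⟩
    intro x hx s
    have hsub : T ⊆ (fun y => y * s) ⁻¹' closure T :=
      fun y hy => subset_closure (hTid y hy s)
    exact closure_minimal hsub (isClosed_closure.preimage (hrs s)) hx
  have hrangeΓ : ∀ a : S, closure (Set.range fun s => a * s) ∈ Γ := by
    intro a
    refine hclosΓ _ ⟨a * a, ⟨a, rfl⟩⟩ ?_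
    rintro x ⟨t, rfl⟩ s
    exact ⟨t * s, (mul_assoc a t s).symm⟩
  have hrange_sub : ∀ a : S, ∀ J ∈ Γ, a ∈ J →
      closure (Set.range fun s => a * s) ⊆ J := by
    intro a J hJ ha
    refine closure_minimal ?_ hJ.2.1
    rintro x ⟨t, rfl⟩
    exact hJ.2.2 a ha t
  have hinterΓ : ∀ J₁ ∈ Γ, ∀ J₂ ∈ Γ, J₁ ∩ J₂ ∈ Γ := by
    intro J₁ h₁ J₂ h₂
    obtain ⟨a, ha⟩ := h₁.1
    obtain ⟨b, hb⟩ := h₂.1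
    obtain ⟨c, hc1, hc2⟩ := hlr a b
    exact ⟨⟨c, hrange_sub a J₁ h₁ ha hc1, hrange_sub b J₂ h₂ hb hc2⟩,
      h₁.2.1.inter h₂.2.1, fun x hx s => ⟨h₁.2.2 x hx.1 s, h₂.2.2 x hx.2 s⟩⟩
  haveI hΓne : Nonempty Γ := ⟨⟨_, hrangeΓ a0⟩⟩
  -- boundedness facts
  have hbddA : ∀ g ∈ X, ∀ J, J ∈ Γ →
      BddAbove (Set.range fun s : J => ν fun t => g (s.1 * t)) := by
    intro g hg J _
    obtain ⟨M, hM⟩ := hXb g hg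
    refine ⟨M + 1, ?_⟩
    rintro x ⟨s, rfl⟩
    exact νub _ (hXinv s.1 g hg) M (fun t => hM _)
  have hle_sub : ∀ g ∈ X, ∀ M : ℝ, (∀ t, |g t| ≤ M) → ∀ J, ∀ hJ : J ∈ Γ,
      -M ≤ ⨆ s : J, ν fun t => g (s.1 * t) := by
    intro g hg M hM J hJ
    obtain ⟨s₀, hs₀⟩ := hJ.1
    exact le_trans (νlb _ (hXinv s₀ g hg) M fun t => hM _)
      (le_ciSup (hbddA g hg J hJ) ⟨s₀, hs₀⟩)
  have hbddB : ∀ g ∈ X,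
      BddBelow (Set.range fun J : Γ => ⨆ s : J.1, ν fun t => g (s.1 * t)) := by
    intro g hg
    obtain ⟨M, hM⟩ := hXb g hg
    refine ⟨-M, ?_⟩
    rintro x ⟨J, rfl⟩
    exact hle_sub g hg M hM J.1 J.2
  have hμ_le : ∀ g ∈ X, ∀ J, ∀ hJ : J ∈ Γ,
      μ g ≤ ⨆ s : J, ν fun t => g (s.1 * t) := by
    intro g hg J hJ
    exact ciInf_le (hbddB g hg) ⟨J, hJ⟩
  -- submean property
  have hsubmean : ∀ f ∈ X, ∀ g₁ ∈ X, ∀ g₂ ∈ X, ∀ α β : ℝ,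
      α ∈ Set.Icc (0 : ℝ) 1 → β ∈ Set.Icc (0 : ℝ) 1 →
      (∀ t, f t ≤ α * g₁ t + β * g₂ t) → μ f ≤ α * μ g₁ + β * μ g₂ := by
    intro f hf g₁ hg₁ g₂ hg₂ α β hα hβ hle
    refine le_of_forall_pos_le_add fun ε hε => ?_
    have hJ1 : ∃ J : Γ, (⨆ s : J.1, ν fun t => g₁ (s.1 * t)) < μ g₁ + ε / 2 := by
      by_contra hcon
      push_neg at hcon
      have : μ g₁ + ε / 2 ≤ μ g₁ := le_ciInf hcon
      linarith
    have hJ2 : ∃ J : Γ, (⨆ s : J.1, ν fun t => g₂ (s.1 * t)) < μ g₂ + ε / 2 := by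
      by_contra hcon
      push_neg at hcon
      have : μ g₂ + ε / 2 ≤ μ g₂ := le_ciInf hcon
      linarith
    obtain ⟨J₁, hJ₁lt⟩ := hJ1
    obtain ⟨J₂, hJ₂lt⟩ := hJ2
    have hJΓ : J₁.1 ∩ J₂.1 ∈ Γ := hinterΓ J₁.1 J₁.2 J₂.1 J₂.2
    haveI : Nonempty ↥(J₁.1 ∩ J₂.1) := hJΓ.1.to_subtype
    have key : ∀ s : ↥(J₁.1 ∩ J₂.1), (ν fun t => f (s.1 * t)) ≤
        α * (⨆ s : J₁.1, ν fun t => g₁ (s.1 * t)) +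
        β * (⨆ s : J₂.1, ν fun t => g₂ (s.1 * t)) := by
      intro s
      have h1 : (ν fun t => g₁ (s.1 * t)) ≤ ⨆ s : J₁.1, ν fun t => g₁ (s.1 * t) :=
        le_ciSup (hbddA g₁ hg₁ J₁.1 J₁.2) ⟨s.1, s.2.1⟩
      have h2 : (ν fun t => g₂ (s.1 * t)) ≤ ⨆ s : J₂.1, ν fun t => g₂ (s.1 * t) :=
        le_ciSup (hbddA g₂ hg₂ J₂.1 J₂.2) ⟨s.1, s.2.2⟩
      have h0 := hν1 _ (hXinv s.1 f hf) _ (hXinv s.1 g₁ hg₁) _ (hXinv s.1 g₂ hg₂)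
        α β hα hβ (fun t => hle (s.1 * t))
      nlinarith [hα.1, hβ.1, mul_le_mul_of_nonneg_left h1 hα.1,
        mul_le_mul_of_nonneg_left h2 hβ.1]
    have hsups := ciSup_le key
    have hμf := hμ_le f hf (J₁.1 ∩ J₂.1) hJΓ
    have hm1 : μ g₁ ≤ ⨆ s : J₁.1, ν fun t => g₁ (s.1 * t) := hμ_le g₁ hg₁ J₁.1 J₁.2
    have hm2 : μ g₂ ≤ ⨆ s : J₂.1, ν fun t => g₂ (s.1 * t) := hμ_le g₂ hg₂ J₂.1 J₂.2
    have e1 : α * (⨆ s : J₁.1, ν fun t => g₁ (s.1 * t)) ≤ α * (μ g₁ + ε / 2) :=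
      mul_le_mul_of_nonneg_left hJ₁lt.le hα.1
    have e2 : β * (⨆ s : J₂.1, ν fun t => g₂ (s.1 * t)) ≤ β * (μ g₂ + ε / 2) :=
      mul_le_mul_of_nonneg_left hJ₂lt.le hβ.1
    nlinarith [hα.2, hβ.2, hα.1, hβ.1, hε]
  -- constants
  have hμconst : ∀ c : ℝ, 0 < c → μ (fun _ => c) = c := by
    intro c hc
    have hsup : ∀ J : Γ, (⨆ s : J.1, ν fun t => (fun _ : S => c) (s.1 * t)) = c := by
      intro J
      haveI := J.2.1.to_subtype
      rw [show (fun s : J.1 => ν fun t => (fun _ : S => c) (s.1 * t)) =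
        fun _ : J.1 => c from funext fun s => hν2 c hc]
      exact ciSup_const
    show (⨅ J : Γ, ⨆ s : J.1, ν fun t => (fun _ : S => c) (s.1 * t)) = c
    rw [show (fun J : Γ => ⨆ s : J.1, ν fun t => (fun _ : S => c) (s.1 * t)) =
      fun _ : Γ => c from funext hsup]
    exact ciInf_const
  -- left subinvariance
  have hsubinv : ∀ a : S, ∀ f ∈ X, μ f ≤ μ fun t => f (a * t) := by
    intro a f hf
    show μ f ≤ ⨅ J : Γ, ⨆ s : J.1, ν fun t => f (a * (s.1 * t))
    refine le_ciInf fun J => ?_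
    obtain ⟨j₀, hj₀⟩ := J.2.1
    have hKΓ : closure ((fun s => a * s) '' J.1) ∈ Γ := by
      refine hclosΓ _ ⟨a * j₀, ⟨j₀, hj₀, rfl⟩⟩ ?_
      rintro x ⟨j, hj, rfl⟩ s
      exact ⟨j * s, J.2.2.2 j hj s, (mul_assoc a j s).symm⟩
    have h1 : μ f ≤ ⨆ x : closure ((fun s => a * s) '' J.1), ν fun t => f (x.1 * t) :=
      hμ_le f hf _ hKΓ
    refine h1.trans ?_
    haveI : Nonempty ↥(closure ((fun s => a * s) '' J.1)) := hKΓ.1.to_subtype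
    refine ciSup_le fun x => ?_
    refine le_of_forall_pos_le_add fun ε hε => ?_
    have luc := (hXluc f hf).2 x.1 ε hε
    obtain ⟨y, hyP, hyim⟩ := mem_closure_iff_nhds.mp x.2 _ luc
    obtain ⟨j, hjJ, rfl⟩ := hyim
    have hstep := νmono_eps _ (hXinv x.1 f hf) _ (hXinv (a * j) f hf) ε hε
      (fun t => by have := (abs_le.mp (hyP t)).1; linarith)
    have hb : BddAbove (Set.range fun s : J.1 => ν fun t => f (a * (s.1 * t))) :=
      hbddA _ (hXinv a f hf) J.1 J.2
    have hle2 : (ν fun t => f (a * j * t)) ≤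
        ⨆ s : J.1, ν fun t => f (a * (s.1 * t)) := by
      have h3 := le_ciSup hb (⟨j, hjJ⟩ : J.1)
      simpa [mul_assoc] using h3
    linarith
  -- strict increase
  have hstrict : (∀ c : ℝ, 0 < c → ∃ δ > (0 : ℝ), ∀ f ∈ X, ν f + δ ≤ ν fun t => f t + c) →
      ∀ c : ℝ, 0 < c → ∃ δ > (0 : ℝ), ∀ f ∈ X, μ f + δ ≤ μ fun t => f t + c := by
    intro h c hc
    obtain ⟨δ, hδ0, hδ⟩ := h c hc
    refine ⟨δ, hδ0, fun f hf => ?_⟩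
    have hfc : (fun t => f t + c) ∈ X := by
      have h0 := hXsl f hf _ (hXc c hc) 1 1 zero_le_one zero_le_one
      have : (fun t => 1 * f t + 1 * (fun _ : S => c) t) = fun t => f t + c := by
        funext t; simp
      rwa [this] at h0
    have hall : ∀ J : Γ, μ f + δ ≤ ⨆ s : J.1, ν fun t => (fun t => f t + c) (s.1 * t) := by
      intro J
      haveI : Nonempty J.1 := J.2.1.to_subtype
      have h1 : μ f ≤ ⨆ s : J.1, ν fun t => f (s.1 * t) := hμ_le f hf J.1 J.2
      have hb' : BddAbove (Set.range fun s : J.1 =>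
          ν fun t => (fun t => f t + c) (s.1 * t)) := hbddA _ hfc J.1 J.2
      have h2 : (⨆ s : J.1, ν fun t => f (s.1 * t)) ≤
          (⨆ s : J.1, ν fun t => (fun t => f t + c) (s.1 * t)) - δ := by
        refine ciSup_le fun s => ?_
        have h3 := hδ _ (hXinv s.1 f hf)
        have h4 : (ν fun t => (fun t => f t + c) (s.1 * t)) ≤
            ⨆ s : J.1, ν fun t => (fun t => f t + c) (s.1 * t) := le_ciSup hb' s
        have h5 : (ν fun t => f (s.1 * t) + c) = ν fun t => (fun t => f t + c) (s.1 * t) := rfl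
        rw [h5] at h3
        linarith
      linarith
    exact le_ciInf hall
  exact ⟨⟨hsubmean, hμconst, hsubinv⟩, hstrict⟩
end

section
/- Every left amenable discrete semigroup is left reversible: if ℓ^∞(S) admits a left invariant mean, then aS ∩ bS ≠ ∅ for all a, b ∈ S. -/
/-- Every left amenable discrete semigroup is left reversible: if
`ℓ^∞(S)` has a left invariant mean then `aS ∩ bS ≠ ∅` for all `a, b ∈ S`. -/
theorem stmt_16 {S : Type*} [Semigroup S] [Nonempty S]
    (m : (S → ℝ) → ℝ)
    (hadd : ∀ f g : S → ℝ, IsBddFn f → IsBddFn g → m (fun s => f s + g s) = m f + m g)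
    (hsmul : ∀ (c : ℝ) (f : S → ℝ), IsBddFn f → m (fun s => c * f s) = c * m f)
    (hpos : ∀ f : S → ℝ, IsBddFn f → (∀ s, 0 ≤ f s) → 0 ≤ m f)
    (hone : m (fun _ => 1) = 1)
    (hinv : ∀ (a : S) (f : S → ℝ), IsBddFn f → m (fun s => f (a * s)) = m f) :
    ∀ a b : S, ∃ s t : S, a * s = b * t := by
  classical
  intro a b
  by_contra h
  push_neg at h
  set f : S → ℝ := fun s => if ∃ t, a * t = s then 1 else 0 with hfdef
  set g : S → ℝ := fun s => if ∃ t, b * t = s then 1 else 0 with hgdef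
  have hbf : IsBddFn f := ⟨1, fun s => by simp only [hfdef]; split <;> norm_num⟩
  have hbg : IsBddFn g := ⟨1, fun s => by simp only [hgdef]; split <;> norm_num⟩
  have hmf : m f = 1 := by
    have := hinv a f hbf
    have heq : (fun s => f (a * s)) = (fun _ : S => (1 : ℝ)) := by
      funext s
      simp only [hfdef]
      rw [if_pos ⟨s, rfl⟩]
    rw [heq, hone] at this
    exact this.symm
  have hmg : m g = 1 := by
    have := hinv b g hbg
    have heq : (fun s => g (b * s)) = (fun _ : S => (1 : ℝ)) := by
      funext s
      simp only [hgdef]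
      rw [if_pos ⟨s, rfl⟩]
    rw [heq, hone] at this
    exact this.symm
  set r : S → ℝ := fun s => 1 - (f s + g s) with hrdef
  have hbr : IsBddFn r := by
    obtain ⟨M1, h1⟩ := hbf
    obtain ⟨M2, h2⟩ := hbg
    refine ⟨1 + (M1 + M2), fun s => ?_⟩
    have := h1 s; have := h2 s
    simp only [hrdef]
    have : |f s + g s| ≤ M1 + M2 := (abs_add_le _ _).trans (by linarith)
    calc |1 - (f s + g s)| ≤ |(1:ℝ)| + |f s + g s| := abs_sub _ _
      _ ≤ 1 + (M1 + M2) := by simp; linarith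
  have hrpos : ∀ s, 0 ≤ r s := by
    intro s
    simp only [hrdef, hfdef, hgdef]
    split_ifs with h1 h2
    · obtain ⟨t, ht⟩ := h1
      obtain ⟨u, hu⟩ := h2
      exact absurd (ht.trans hu.symm) (h t u)
    · norm_num
    · norm_num
    · norm_num
  have hmr : 0 ≤ m r := hpos r hbr hrpos
  have hbfg : IsBddFn (fun s => f s + g s) := by
    obtain ⟨M1, h1⟩ := hbf
    obtain ⟨M2, h2⟩ := hbg
    exact ⟨M1 + M2, fun s => (abs_add_le _ _).trans (by have := h1 s; have := h2 s; linarith)⟩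
  have hfg : m (fun s => f s + g s) = 2 := by
    rw [hadd f g hbf hbg, hmf, hmg]; norm_num
  have htot : m (fun s => (f s + g s) + r s) = 2 + m r := by
    rw [hadd _ _ hbfg hbr, hfg]
  have heq1 : (fun s => (f s + g s) + r s) = (fun _ : S => (1 : ℝ)) := by
    funext s; simp only [hrdef]; ring
  rw [heq1, hone] at htot
  linarith
end
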